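/- Let N = N(Q_n, m) be a quasi Q_n-filiform Lie algebra and let U be the subspace of N spanned by {e_{10}, e_{11}, e_{20}, e_{21}, ..., e_{m0}, e_{m1}}. Then N is quasi-cyclic: N = U ⊕ c^1U ⊕ c^2U ⊕ ... ⊕ c^{n-1}U as a direct sum of vector subspaces, where c^0U = U and c^iU is the span of all brackets [u, v] with u ∈ U, v ∈ c^{i-1}U. -/

import Mathlib

open Finset

/-- A quasi `Qₙ`-filiform Lie algebra `N = N(Qₙ, m, r)`: a finite-dimensional complex
nilpotent Lie algebra which is the sum of `m` pairwise commuting subalgebras, each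
isomorphic to the filiform Lie algebra `Qₙ` with basis `e i 0, …, e i n` satisfying the
`Qₙ` bracket relations, and such that
`{e 1 0, …, e 1 (n-1), …, e m 0, …, e m (n-1), e 1 n, …, e r n}` is a basis of `N`,
where `r = dim c^{n-1} N`. -/
structure QuasiQnFiliform (n m r : ℕ) (N : Type*) [LieRing N] [LieAlgebra ℂ N] : Type _ where
  /-- the distinguished vectors `e_{ij}`, for `1 ≤ i ≤ m`, `0 ≤ j ≤ n` -/
  e : ℕ → ℕ → N
  /-- `N` is nilpotent -/
  nilpotent : LieRing.IsNilpotent N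
  /-- `N` is finite-dimensional -/
  findim : FiniteDimensional ℂ N
  /-- `[e_{i0}, e_{ij}] = e_{i,j+1}` for `1 ≤ j ≤ n - 2` -/
  bracket_e0 : ∀ i j, 1 ≤ i → i ≤ m → 1 ≤ j → j ≤ n - 2 → ⁅e i 0, e i j⁆ = e i (j + 1)
  /-- `[e_{i0}, e_{i,n-1}] = 0` -/
  bracket_e0_top : ∀ i, 1 ≤ i → i ≤ m → ⁅e i 0, e i (n - 1)⁆ = 0
  /-- `[e_{i0}, e_{in}] = 0` -/
  bracket_e0_n : ∀ i, 1 ≤ i → i ≤ m → ⁅e i 0, e i n⁆ = 0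
  /-- `[e_{ij}, e_{i,n-j}] = (-1)^j e_{in}` for `1 ≤ j ≤ n - 1` -/
  bracket_pair : ∀ i j, 1 ≤ i → i ≤ m → 1 ≤ j → j ≤ n - 1 →
    ⁅e i j, e i (n - j)⁆ = ((-1 : ℂ)) ^ j • e i n
  /-- all remaining brackets inside a component vanish -/
  bracket_zero : ∀ i j k, 1 ≤ i → i ≤ m → 1 ≤ j → j ≤ n → 1 ≤ k → k ≤ n → j + k ≠ n →
    ⁅e i j, e i k⁆ = 0
  /-- distinct components commute: `[N_i, N_{i'}] = 0` -/
  bracket_comm : ∀ i i' j j', 1 ≤ i → i ≤ m → 1 ≤ i' → i' ≤ m → i ≠ i' → j ≤ n → j' ≤ n →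
    ⁅e i j, e i' j'⁆ = 0
  /-- `{e_{i0}, …, e_{in}}` is linearly independent (each `Nᵢ ≅ Qₙ` has it as a basis) -/
  indep_comp : ∀ i, 1 ≤ i → i ≤ m → LinearIndependent ℂ (fun j : Fin (n + 1) => e i (j : ℕ))
  /-- the distinguished family is linearly independent … -/
  basis_indep : LinearIndependent ℂ
    (Sum.elim (fun p : Fin m × Fin n => e ((p.1 : ℕ) + 1) (p.2 : ℕ))
      (fun t : Fin r => e ((t : ℕ) + 1) n))
  /-- … and spans `N`, i.e. it is a basis of `N` (in particular `N = N₁ + ⋯ + N_m`) -/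
  basis_span : Submodule.span ℂ (Set.range
    (Sum.elim (fun p : Fin m × Fin n => e ((p.1 : ℕ) + 1) (p.2 : ℕ))
      (fun t : Fin r => e ((t : ℕ) + 1) n))) = ⊤
  /-- `r = dim c^{n-1} N` -/
  rank_lcs : Module.finrank ℂ (LieModule.lowerCentralSeries ℂ N N (n - 1)) = r

/-- The span of brackets `[u, v]` with `u ∈ U`, `v ∈ V`. -/
def bracketSpan {N : Type*} [LieRing N] [LieAlgebra ℂ N] (U V : Submodule ℂ N) :
    Submodule ℂ N :=
  Submodule.span ℂ {x | ∃ u ∈ U, ∃ v ∈ V, x = ⁅u, v⁆}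

/-- `cPow U i = cⁱU`, defined by `c⁰U = U` and `cⁱU = span [U, c^{i-1}U]`. -/
def cPow {N : Type*} [LieRing N] [LieAlgebra ℂ N] (U : Submodule ℂ N) : ℕ → Submodule ℂ N
  | 0 => U
  | (i + 1) => bracketSpan U (cPow U i)

lemma lie_mem_span_bracket {N : Type*} [LieRing N] [LieAlgebra ℂ N]
    (s t : Set N) {u v : N} (hu : u ∈ Submodule.span ℂ s) (hv : v ∈ Submodule.span ℂ t) :
    ⁅u, v⁆ ∈ Submodule.span ℂ {x | ∃ a ∈ s, ∃ b ∈ t, x = ⁅a, b⁆} := by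
  induction hu using Submodule.span_induction with
  | mem a ha =>
    induction hv using Submodule.span_induction with
    | mem b hb => exact Submodule.subset_span ⟨a, ha, b, hb, rfl⟩
    | zero => simp
    | add x y _ _ hx hy => rw [lie_add]; exact add_mem hx hy
    | smul c x _ hx => rw [lie_smul]; exact Submodule.smul_mem _ _ hx
  | zero => simp
  | add x y _ _ hx hy => rw [add_lie]; exact add_mem hx hy
  | smul c x _ hx => rw [smul_lie]; exact Submodule.smul_mem _ _ hx

lemma bracketSpan_span_span {N : Type*} [LieRing N] [LieAlgebra ℂ N] (s t : Set N) :
    bracketSpan (Submodule.span ℂ s) (Submodule.span ℂ t) =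
      Submodule.span ℂ {x | ∃ a ∈ s, ∃ b ∈ t, x = ⁅a, b⁆} := by
  apply le_antisymm
  · rw [bracketSpan, Submodule.span_le]
    rintro x ⟨u, hu, v, hv, rfl⟩
    exact lie_mem_span_bracket s t hu hv
  · rw [Submodule.span_le]
    rintro x ⟨a, ha, b, hb, rfl⟩
    exact Submodule.subset_span ⟨a, Submodule.subset_span ha, b, Submodule.subset_span hb, rfl⟩

/-- **Lemma 1.3.** `N(Qₙ, m)` is quasi-cyclic: if `U` is the subspace spanned by
`{e₁₀, e₁₁, …, e_{m0}, e_{m1}}` then `N = U ⊕ c¹U ⊕ ⋯ ⊕ c^{n-1}U`. -/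
theorem quasiQnFiliform_quasiCyclic
    (n d m r : ℕ) (hn : n = 2 * d + 1) (hd : 2 ≤ d)
    (hm : 1 ≤ m) (hr : 1 ≤ r) (hrm : r ≤ m)
    (N : Type*) [LieRing N] [LieAlgebra ℂ N] (Q : QuasiQnFiliform n m r N)
    (U : Submodule ℂ N)
    (hU : U = Submodule.span ℂ
      {v | ∃ i, 1 ≤ i ∧ i ≤ m ∧ (v = Q.e i 0 ∨ v = Q.e i 1)}) :
    (⨆ i : Fin n, cPow U (i : ℕ)) = ⊤ ∧ iSupIndep (fun i : Fin n => cPow U (i : ℕ)) := by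
  haveI := Q.findim
  have hn5 : 5 ≤ n := by omega
  set sU : Set N := {v | ∃ i, 1 ≤ i ∧ i ≤ m ∧ (v = Q.e i 0 ∨ v = Q.e i 1)} with hsU
  set sF : ℕ → Set N := fun k => {v | ∃ i, 1 ≤ i ∧ i ≤ m ∧ v = Q.e i k} with hsF
  -- the key computation: `cPow U k = span (sF (k+1))` for `1 ≤ k ≤ n-1`
  have key : ∀ k, 1 ≤ k → k ≤ n - 1 → cPow U k = Submodule.span ℂ (sF (k + 1)) := by
    intro k
    induction k with
    | zero => intro h; omega
    | succ k ih =>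
      intro _ hk
      have hcp : cPow U (k + 1) = bracketSpan U (cPow U k) := rfl
      rcases Nat.eq_zero_or_pos k with rfl | hk1
      · -- base case: cPow U 1
        rw [hcp, cPow, hU, bracketSpan_span_span]
        apply le_antisymm
        · rw [Submodule.span_le]
          rintro x ⟨a, ⟨i, hi1, hi2, ha⟩, b, ⟨i', hi1', hi2', hb⟩, rfl⟩
          by_cases hii : i = i'
          · subst hii
            rcases ha with rfl | rfl <;> rcases hb with rfl | rfl
            · simp
            · rw [Q.bracket_e0 i 1 hi1 hi2 le_rfl (by omega)]
              exact Submodule.subset_span ⟨i, hi1, hi2, rfl⟩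
            · rw [← lie_skew, Q.bracket_e0 i 1 hi1 hi2 le_rfl (by omega)]
              exact Submodule.neg_mem _ (Submodule.subset_span ⟨i, hi1, hi2, rfl⟩)
            · simp
          · rcases ha with rfl | rfl <;> rcases hb with rfl | rfl
            · rw [Q.bracket_comm i i' 0 0 hi1 hi2 hi1' hi2' hii (by omega) (by omega)]
              exact Submodule.zero_mem _
            · rw [Q.bracket_comm i i' 0 1 hi1 hi2 hi1' hi2' hii (by omega) (by omega)]
              exact Submodule.zero_mem _
            · rw [Q.bracket_comm i i' 1 0 hi1 hi2 hi1' hi2' hii (by omega) (by omega)]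
              exact Submodule.zero_mem _
            · rw [Q.bracket_comm i i' 1 1 hi1 hi2 hi1' hi2' hii (by omega) (by omega)]
              exact Submodule.zero_mem _
        · rw [Submodule.span_le]
          rintro x ⟨i, hi1, hi2, rfl⟩
          exact Submodule.subset_span ⟨Q.e i 0, ⟨i, hi1, hi2, Or.inl rfl⟩,
            Q.e i 1, ⟨i, hi1, hi2, Or.inr rfl⟩,
            (Q.bracket_e0 i 1 hi1 hi2 le_rfl (by omega)).symm⟩
      · -- inductive step
        rw [hcp, ih hk1 (by omega), hU, bracketSpan_span_span]
        apply le_antisymm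
        · rw [Submodule.span_le]
          rintro x ⟨a, ⟨i, hi1, hi2, ha⟩, b, ⟨i', hi1', hi2', rfl⟩, rfl⟩
          by_cases hii : i = i'
          · subst hii
            by_cases htop : k + 1 = n - 1
            · have hn' : k + 1 + 1 = n := by omega
              rcases ha with rfl | rfl
              · rw [show k + 1 = n - 1 from htop, Q.bracket_e0_top i hi1 hi2]
                exact Submodule.zero_mem _
              · have hp := Q.bracket_pair i 1 hi1 hi2 le_rfl (by omega)
                rw [show n - 1 = k + 1 from by omega] at hp
                rw [hp]
                exact Submodule.smul_mem _ _
                  (Submodule.subset_span ⟨i, hi1, hi2, by rw [hn']⟩)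
            · rcases ha with rfl | rfl
              · rw [Q.bracket_e0 i (k + 1) hi1 hi2 (by omega) (by omega)]
                exact Submodule.subset_span ⟨i, hi1, hi2, rfl⟩
              · rw [Q.bracket_zero i 1 (k + 1) hi1 hi2 le_rfl (by omega) (by omega)
                  (by omega) (by omega)]
                exact Submodule.zero_mem _
          · rcases ha with rfl | rfl
            · rw [Q.bracket_comm i i' 0 (k + 1) hi1 hi2 hi1' hi2' hii (by omega) (by omega)]
              exact Submodule.zero_mem _
            · rw [Q.bracket_comm i i' 1 (k + 1) hi1 hi2 hi1' hi2' hii (by omega) (by omega)]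
              exact Submodule.zero_mem _
        · rw [Submodule.span_le]
          rintro x ⟨i, hi1, hi2, rfl⟩
          by_cases htop : k + 1 = n - 1
          · have hp := Q.bracket_pair i 1 hi1 hi2 le_rfl (by omega)
            rw [show n - 1 = k + 1 from by omega] at hp
            have hmem : ⁅Q.e i 1, Q.e i (k + 1)⁆ ∈
                Submodule.span ℂ {x | ∃ a ∈ sU, ∃ b ∈ sF (k + 1), x = ⁅a, b⁆} :=
              Submodule.subset_span ⟨_, ⟨i, hi1, hi2, Or.inr rfl⟩, _, ⟨i, hi1, hi2, rfl⟩, rfl⟩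
            rw [hp] at hmem
            rw [show k + 1 + 1 = n from by omega,
              show Q.e i n = (-1 : ℂ) • (((-1 : ℂ)) ^ 1 • Q.e i n) from by simp]
            exact Submodule.smul_mem _ _ hmem
          · exact Submodule.subset_span ⟨_, ⟨i, hi1, hi2, Or.inl rfl⟩, _, ⟨i, hi1, hi2, rfl⟩,
              (Q.bracket_e0 i (k + 1) hi1 hi2 (by omega) (by omega)).symm⟩
  -- membership of e's in the lower central series
  have lcs1 : ∀ j, j ≤ n - 2 → ∀ i, 1 ≤ i → i ≤ m →
      Q.e i (j + 1) ∈ LieModule.lowerCentralSeries ℂ N N j := by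
    intro j
    induction j with
    | zero => intro _ i _ _; rw [LieModule.lowerCentralSeries_zero]; exact LieSubmodule.mem_top _
    | succ j ih =>
      intro hj i hi1 hi2
      rw [LieModule.lowerCentralSeries_succ,
        ← Q.bracket_e0 i (j + 1) hi1 hi2 (by omega) (by omega)]
      exact LieSubmodule.lie_mem_lie (LieSubmodule.mem_top _) (ih (by omega) i hi1 hi2)
  have lcsn : ∀ i, 1 ≤ i → i ≤ m →
      Q.e i n ∈ LieModule.lowerCentralSeries ℂ N N (n - 1) := by
    intro i hi1 hi2
    have h1 := lcs1 (n - 2) le_rfl i hi1 hi2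
    have h2 : ⁅Q.e i 1, Q.e i (n - 1)⁆ ∈ LieModule.lowerCentralSeries ℂ N N (n - 1) := by
      rw [show n - 1 = (n - 2) + 1 from by omega, LieModule.lowerCentralSeries_succ]
      exact LieSubmodule.lie_mem_lie (LieSubmodule.mem_top _) h1
    rw [Q.bracket_pair i 1 hi1 hi2 le_rfl (by omega)] at h2
    have h3 := (LieSubmodule.mem_toSubmodule _).mpr h2
    have h4 := Submodule.smul_mem _ ((-1 : ℂ)) h3
    have h5 := (LieSubmodule.mem_toSubmodule _).mp h4
    simpa using h5
  -- the top piece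
  set g : Fin r → N := fun t => Q.e ((t : ℕ) + 1) n with hg
  have hgind : LinearIndependent ℂ g := by
    have h := Q.basis_indep.comp Sum.inr Sum.inr_injective
    rwa [Sum.elim_comp_inr] at h
  have hfr : Module.finrank ℂ (Submodule.span ℂ (Set.range g)) = r := by
    rw [finrank_span_eq_card hgind, Fintype.card_fin]
  have hFrlcs : Submodule.span ℂ (Set.range g) ≤
      (LieModule.lowerCentralSeries ℂ N N (n - 1) : Submodule ℂ N) := by
    rw [Submodule.span_le]
    rintro x ⟨t, rfl⟩
    exact (LieSubmodule.mem_toSubmodule _).mpr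
      (lcsn ((t : ℕ) + 1) (by omega) (by have := t.2; omega))
  have hspanFr : Submodule.span ℂ (Set.range g) =
      (LieModule.lowerCentralSeries ℂ N N (n - 1) : Submodule ℂ N) :=
    Submodule.eq_of_le_of_finrank_le hFrlcs (by rw [hfr]; exact le_of_eq Q.rank_lcs)
  have hFn : Submodule.span ℂ (sF n) = Submodule.span ℂ (Set.range g) := by
    apply le_antisymm
    · have hle : Submodule.span ℂ (sF n) ≤
          (LieModule.lowerCentralSeries ℂ N N (n - 1) : Submodule ℂ N) := by
        rw [Submodule.span_le]
        rintro x ⟨i, hi1, hi2, rfl⟩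
        exact (LieSubmodule.mem_toSubmodule _).mpr (lcsn i hi1 hi2)
      rwa [← hspanFr] at hle
    · rw [Submodule.span_le]
      rintro x ⟨t, rfl⟩
      exact Submodule.subset_span ⟨(t : ℕ) + 1, by omega, by have := t.2; omega, rfl⟩
  constructor
  · -- the sup is everything
    apply le_antisymm le_top
    rw [← Q.basis_span, Submodule.span_le]
    rintro x ⟨p, rfl⟩
    rcases p with p | t
    · simp only [Sum.elim_inl]
      by_cases h2 : (p.2 : ℕ) ≤ 1
      · have hx : Q.e ((p.1 : ℕ) + 1) (p.2 : ℕ) ∈ U := by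
          rw [hU]
          apply Submodule.subset_span
          refine ⟨(p.1 : ℕ) + 1, by omega, by have := p.1.2; omega, ?_⟩
          rcases (by omega : (p.2 : ℕ) = 0 ∨ (p.2 : ℕ) = 1) with h0 | h0
          · left; rw [h0]
          · right; rw [h0]
        exact (le_iSup (fun i : Fin n => cPow U (i : ℕ)) ⟨0, by omega⟩) hx
      · have hmem : Q.e ((p.1 : ℕ) + 1) (p.2 : ℕ) ∈ cPow U ((p.2 : ℕ) - 1) := by
          rw [key ((p.2 : ℕ) - 1) (by omega) (by have := p.2.2; omega)]
          exact Submodule.subset_span ⟨(p.1 : ℕ) + 1, by omega, by have := p.1.2; omega,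
            by rw [show (p.2 : ℕ) - 1 + 1 = (p.2 : ℕ) from by omega]⟩
        exact (le_iSup (fun i : Fin n => cPow U (i : ℕ))
          ⟨(p.2 : ℕ) - 1, by have := p.2.2; omega⟩) hmem
    · simp only [Sum.elim_inr]
      have hmem : Q.e ((t : ℕ) + 1) n ∈ cPow U (n - 1) := by
        rw [key (n - 1) (by omega) le_rfl, show n - 1 + 1 = n from by omega, hFn]
        exact Submodule.subset_span ⟨t, rfl⟩
      exact (le_iSup (fun i : Fin n => cPow U (i : ℕ)) ⟨n - 1, by omega⟩) hmem
  · -- independence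
    set b := Sum.elim (fun p : Fin m × Fin n => Q.e ((p.1 : ℕ) + 1) (p.2 : ℕ))
      (fun t : Fin r => Q.e ((t : ℕ) + 1) n) with hb
    have hbi : LinearIndependent ℂ b := Q.basis_indep
    set lvl : (Fin m × Fin n) ⊕ Fin r → Fin n := fun x =>
      Sum.elim (fun p : Fin m × Fin n =>
        if (p.2 : ℕ) ≤ 1 then (⟨0, by omega⟩ : Fin n)
        else ⟨(p.2 : ℕ) - 1, by have := p.2.2; omega⟩)
        (fun _ => (⟨n - 1, by omega⟩ : Fin n)) x with hlvl
    have hV : ∀ i : Fin n, cPow U (i : ℕ) = Submodule.span ℂ (b '' (lvl ⁻¹' {i})) := by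
      intro i
      rcases (by omega : (i : ℕ) = 0 ∨ (1 ≤ (i : ℕ) ∧ (i : ℕ) ≤ n - 2) ∨ (i : ℕ) = n - 1)
        with hi0 | ⟨hia, hib⟩ | hitop
      · -- level 0
        rw [hi0]
        show U = _
        apply le_antisymm
        · rw [hU, Submodule.span_le]
          rintro v ⟨i0, h1, h2, hv⟩
          apply Submodule.subset_span
          rcases hv with rfl | rfl
          · refine ⟨Sum.inl (⟨i0 - 1, by omega⟩, ⟨0, by omega⟩), ?_, ?_⟩
            · simp only [Set.mem_preimage, Set.mem_singleton_iff, hlvl, Sum.elim_inl]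
              rw [if_pos (by norm_num)]
              exact Fin.ext (by simp [hi0])
            · simp only [hb, Sum.elim_inl]
              rw [show i0 - 1 + 1 = i0 from by omega]
          · refine ⟨Sum.inl (⟨i0 - 1, by omega⟩, ⟨1, by omega⟩), ?_, ?_⟩
            · simp only [Set.mem_preimage, Set.mem_singleton_iff, hlvl, Sum.elim_inl]
              rw [if_pos (by norm_num)]
              exact Fin.ext (by simp [hi0])
            · simp only [hb, Sum.elim_inl]
              rw [show i0 - 1 + 1 = i0 from by omega]
        · rw [Submodule.span_le]
          rintro v ⟨x, hx, rfl⟩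
          rw [hU]
          apply Submodule.subset_span
          rcases x with p | t
          · simp only [Set.mem_preimage, Set.mem_singleton_iff, hlvl, Sum.elim_inl] at hx
            split_ifs at hx with h
            · refine ⟨(p.1 : ℕ) + 1, by omega, by have := p.1.2; omega, ?_⟩
              simp only [hb, Sum.elim_inl]
              rcases (by omega : (p.2 : ℕ) = 0 ∨ (p.2 : ℕ) = 1) with h0 | h0
              · left; rw [h0]
              · right; rw [h0]
            · exfalso
              have := congrArg Fin.val hx
              simp only [Fin.val_mk] at this
              omega
          · exfalso
            simp only [Set.mem_preimage, Set.mem_singleton_iff, hlvl, Sum.elim_inr] at hx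
            have := congrArg Fin.val hx
            simp only [Fin.val_mk] at this
            omega
      · -- middle levels
        rw [key (i : ℕ) hia (by omega)]
        apply le_antisymm
        · rw [Submodule.span_le]
          rintro v ⟨i0, h1, h2, rfl⟩
          apply Submodule.subset_span
          refine ⟨Sum.inl (⟨i0 - 1, by omega⟩, ⟨(i : ℕ) + 1, by omega⟩), ?_, ?_⟩
          · simp only [Set.mem_preimage, Set.mem_singleton_iff, hlvl, Sum.elim_inl]
            rw [if_neg (by simp; omega)]
            exact Fin.ext (by simp)
          · simp only [hb, Sum.elim_inl]
            rw [show i0 - 1 + 1 = i0 from by omega]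
        · rw [Submodule.span_le]
          rintro v ⟨x, hx, rfl⟩
          apply Submodule.subset_span
          rcases x with p | t
          · simp only [Set.mem_preimage, Set.mem_singleton_iff, hlvl, Sum.elim_inl] at hx
            split_ifs at hx with h
            · exfalso
              have := congrArg Fin.val hx
              simp only [Fin.val_mk] at this
              omega
            · have hv := congrArg Fin.val hx
              simp only [Fin.val_mk] at hv
              refine ⟨(p.1 : ℕ) + 1, by omega, by have := p.1.2; omega, ?_⟩
              simp only [hb, Sum.elim_inl]
              rw [show (i : ℕ) + 1 = (p.2 : ℕ) from by omega]
          · exfalso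
            simp only [Set.mem_preimage, Set.mem_singleton_iff, hlvl, Sum.elim_inr] at hx
            have := congrArg Fin.val hx
            simp only [Fin.val_mk] at this
            omega
      · -- top level
        rw [hitop, key (n - 1) (by omega) le_rfl, show n - 1 + 1 = n from by omega, hFn]
        congr 1
        ext v
        constructor
        · rintro ⟨t, rfl⟩
          refine ⟨Sum.inr t, ?_, ?_⟩
          · simp only [Set.mem_preimage, Set.mem_singleton_iff, hlvl, Sum.elim_inr]
            exact Fin.ext (by simp [hitop])
          · simp [hb, hg]
        · rintro ⟨x, hx, rfl⟩
          rcases x with p | t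
          · exfalso
            simp only [Set.mem_preimage, Set.mem_singleton_iff, hlvl, Sum.elim_inl] at hx
            split_ifs at hx with h
            · have := congrArg Fin.val hx
              simp only [Fin.val_mk] at this
              omega
            · have := congrArg Fin.val hx
              simp only [Fin.val_mk] at this
              have := p.2.2
              omega
          · exact ⟨t, by simp [hb, hg]⟩
    rw [iSupIndep_def]
    intro i
    rw [hV i]
    have hle : (⨆ j, ⨆ (_ : j ≠ i), cPow U ((j : Fin n) : ℕ)) ≤
        Submodule.span ℂ (b '' (⋃ j ∈ {j : Fin n | j ≠ i}, lvl ⁻¹' {j})) := by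
      refine iSup_le fun j => iSup_le fun hj => ?_
      rw [hV j]
      have hsub : lvl ⁻¹' {j} ⊆ ⋃ j' ∈ {j' : Fin n | j' ≠ i}, lvl ⁻¹' {j'} :=
        fun y hy => Set.mem_biUnion hj hy
      exact Submodule.span_mono (Set.image_mono hsub)
    refine Disjoint.mono_right hle (hbi.disjoint_span_image ?_)
    rw [Set.disjoint_left]
    rintro x hx hx'
    simp only [Set.mem_iUnion, Set.mem_preimage, Set.mem_singleton_iff] at hx hx'
    obtain ⟨j, hj, hxj⟩ := hx'
    exact hj (hxj.symm.trans hx)
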